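/- Let (S,·,⁻¹) be a finite combinatorial inverse semigroup and let p ≥ 2 be such that x^p = x^{p+1} for all x ∈ S (so the natural partial order on S is a meet-semilattice and (S, +_nat, ·) is an ai-semiring). If the 6-element Brandt monoid B_2^1 satisfies every inverse semigroup identity satisfied by (S,·,⁻¹), then the ai-semiring (B_2^1, +_nat, ·) satisfies every semiring identity satisfied by (S, +_nat, ·). -/

import Mathlib

universe u v

/-- An inverse semigroup: every element has a unique (generalized) inverse. -/
class InverseSemigroup (S : Type*) extends Semigroup S, Inv S where
  mul_inv_mul : ∀ x : S, x * x⁻¹ * x = x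
  inv_mul_inv : ∀ x : S, x⁻¹ * x * x⁻¹ = x⁻¹
  inv_unique : ∀ x y : S, x * y * x = x → y * x * y = y → y = x⁻¹

/-- Terms in the signature `{·, ⁻¹}` over countably many variables. -/
inductive InvTerm : Type
  | var : ℕ → InvTerm
  | mul : InvTerm → InvTerm → InvTerm
  | inv : InvTerm → InvTerm

/-- Evaluation of a `{·, ⁻¹}`-term under explicit operations and an assignment. -/
def InvTerm.evalOp {S : Type*} (mul : S → S → S) (inv : S → S) (ρ : ℕ → S) : InvTerm → S
  | .var i => ρ i
  | .mul u v => mul (u.evalOp mul inv ρ) (v.evalOp mul inv ρ)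
  | .inv u => inv (u.evalOp mul inv ρ)

/-- The algebra `(S, ·, ⁻¹)` satisfies the inverse semigroup identity `e.1 ≈ e.2`. -/
def SatInv (S : Type*) [Mul S] [Inv S] (e : InvTerm × InvTerm) : Prop :=
  ∀ ρ : ℕ → S, e.1.evalOp (· * ·) (·⁻¹) ρ = e.2.evalOp (· * ·) (·⁻¹) ρ

/-- The subalgebra with carrier `T` of `(S, mul, inv)` satisfies the identity `e.1 ≈ e.2`. -/
def SatInvOn {S : Type*} (T : Set S) (mul : S → S → S) (inv : S → S)
    (e : InvTerm × InvTerm) : Prop :=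
  ∀ ρ : ℕ → S, (∀ i, ρ i ∈ T) → e.1.evalOp mul inv ρ = e.2.evalOp mul inv ρ

/-- A subset of a semigroup which is a subgroup (a group under the induced multiplication). -/
def IsSubgroupSet {S : Type*} [Mul S] (H : Set S) : Prop :=
  H.Nonempty ∧ (∀ a ∈ H, ∀ b ∈ H, a * b ∈ H) ∧
    ∃ e ∈ H, (∀ a ∈ H, e * a = a ∧ a * e = a) ∧ ∀ a ∈ H, ∃ b ∈ H, a * b = e ∧ b * a = e

/-- A semigroup is combinatorial if all of its subgroups are trivial. -/
def Combinatorial (S : Type*) [Mul S] : Prop :=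
  ∀ H : Set S, IsSubgroupSet H → ∀ a ∈ H, ∀ b ∈ H, a = b

/-- The natural partial order of an inverse semigroup: `x ≤ y` iff `x = x x⁻¹ y`. -/
def natLe {S : Type*} [Mul S] [Inv S] (x y : S) : Prop := x = x * x⁻¹ * y

/-- `z` is the greatest lower bound (meet) of `x` and `y` with respect to `le`. -/
def IsMeetWrt {S : Type*} (le : S → S → Prop) (x y z : S) : Prop :=
  le z x ∧ le z y ∧ ∀ w, le w x → le w y → le w z

/-- `spowM x k = x^(k+1)`, the `(k+1)`-st power in a semigroup. -/
def spowM {S : Type*} [Mul S] (x : S) : ℕ → S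
  | 0 => x
  | k + 1 => spowM x k * x

/-- Terms in the signature `{+, ·}` over countably many variables. -/
inductive SRTerm : Type
  | var : ℕ → SRTerm
  | add : SRTerm → SRTerm → SRTerm
  | mul : SRTerm → SRTerm → SRTerm

/-- Evaluation of a `{+, ·}`-term under explicit operations and an assignment. -/
def SRTerm.evalOp {S : Type*} (add mul : S → S → S) (ρ : ℕ → S) : SRTerm → S
  | .var i => ρ i
  | .add u v => add (u.evalOp add mul ρ) (v.evalOp add mul ρ)
  | .mul u v => mul (u.evalOp add mul ρ) (v.evalOp add mul ρ)

/-- `(S, add, mul)` is an additively idempotent semiring. -/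
structure IsAiSemiring {S : Type*} (add mul : S → S → S) : Prop where
  add_assoc : ∀ a b c, add (add a b) c = add a (add b c)
  add_comm : ∀ a b, add a b = add b a
  add_idem : ∀ a, add a a = a
  mul_assoc : ∀ a b c, mul (mul a b) c = mul a (mul b c)
  left_distrib : ∀ a b c, mul a (add b c) = add (mul a b) (mul a c)
  right_distrib : ∀ a b c, mul (add a b) c = add (mul a c) (mul b c)

/-- The algebra `(S, add, mul)` satisfies the semiring identity `e.1 ≈ e.2`. -/
def SatSR {S : Type*} (add mul : S → S → S) (e : SRTerm × SRTerm) : Prop :=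
  ∀ ρ : ℕ → S, e.1.evalOp add mul ρ = e.2.evalOp add mul ρ

/-- The subalgebra of `(S, add, mul)` with carrier `T` satisfies the identity `e.1 ≈ e.2`. -/
def SatSROn {S : Type*} (T : Set S) (add mul : S → S → S) (e : SRTerm × SRTerm) : Prop :=
  ∀ ρ : ℕ → S, (∀ i, ρ i ∈ T) → e.1.evalOp add mul ρ = e.2.evalOp add mul ρ

/-- The 6-element Brandt monoid `B₂¹`: the zero matrix, the four matrix units, and the
identity matrix, among zero-one `2 × 2` matrices. -/
def B21 : Set (Matrix (Fin 2) (Fin 2) ℕ) :=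
  {0, Matrix.single 0 0 1, Matrix.single 0 1 1,
    Matrix.single 1 0 1, Matrix.single 1 1 1, 1}

/-- The Hadamard (entrywise) product of matrices. -/
def hprod {t : ℕ} (A B : Matrix (Fin t) (Fin t) ℕ) : Matrix (Fin t) (Fin t) ℕ :=
  Matrix.of fun i j => A i j * B i j

namespace ISG
variable {S : Type*} [InverseSemigroup S]

lemma mim (x : S) : x * x⁻¹ * x = x := InverseSemigroup.mul_inv_mul x
lemma imi (x : S) : x⁻¹ * x * x⁻¹ = x⁻¹ := InverseSemigroup.inv_mul_inv x
lemma iu (x y : S) (h1 : x * y * x = x) (h2 : y * x * y = y) : y = x⁻¹ :=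
  InverseSemigroup.inv_unique x y h1 h2

lemma inv_inv' (x : S) : x⁻¹⁻¹ = x := (iu x⁻¹ x (imi x) (mim x)).symm

lemma idemR (x : S) : (x * x⁻¹) * (x * x⁻¹) = x * x⁻¹ := by
  rw [← mul_assoc, mim]

lemma idemL (x : S) : (x⁻¹ * x) * (x⁻¹ * x) = x⁻¹ * x := by
  rw [← mul_assoc, imi]

lemma inv_idem {e : S} (he : e * e = e) : e⁻¹ = e :=
  (iu e e (by rw [he, he]) (by rw [he, he])).symm

lemma idem_mul {e : S} (he : e * e = e) (z : S) : e * (e * z) = e * z := by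
  rw [← mul_assoc, he]

lemma idem_sq {e f : S} (he : e * e = e) (hf : f * f = f) : (e * f) * (e * f) = e * f := by
  have h1 : (e*f) * (f*(e*f)⁻¹*e) * (e*f) = e*f := by
    have h := mim (e*f)
    simp only [mul_assoc] at h ⊢
    rw [idem_mul hf, idem_mul he]
    exact h
  have h2 : (f*(e*f)⁻¹*e) * (e*f) * (f*(e*f)⁻¹*e) = f*(e*f)⁻¹*e := by
    have h := imi (e*f)
    have h2' : f*(((e*f)⁻¹*(e*f)*(e*f)⁻¹)*e) = f*((e*f)⁻¹*e) := by rw [h]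
    simp only [mul_assoc] at h2' ⊢
    rw [idem_mul he, idem_mul hf]
    exact h2'
  have hg : f*(e*f)⁻¹*e = (e*f)⁻¹ := iu (e*f) _ h1 h2
  have hsq : (f*(e*f)⁻¹*e)*(f*(e*f)⁻¹*e) = f*(e*f)⁻¹*e := by
    have h := imi (e*f)
    have h' : f*(((e*f)⁻¹*(e*f)*(e*f)⁻¹)*e) = f*((e*f)⁻¹*e) := by rw [h]
    simp only [mul_assoc] at h' ⊢
    exact h'
  have hgg : (e*f)⁻¹ * (e*f)⁻¹ = (e*f)⁻¹ := by
    rw [← hg]; exact hsq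
  have hef : e*f = (e*f)⁻¹ := by
    rw [← inv_idem hgg, inv_inv']
  rw [hef]; exact hgg

lemma idem_comm {e f : S} (he : e * e = e) (hf : f * f = f) : e * f = f * e := by
  have h1 := idem_sq he hf
  have h2 := idem_sq hf he
  have A : (e*f) * (f*e) * (e*f) = e*f := by
    have h1' := h1
    simp only [mul_assoc] at h1' ⊢
    rw [idem_mul hf, idem_mul he]
    exact h1'
  have B : (f*e) * (e*f) * (f*e) = f*e := by
    have h2' := h2
    simp only [mul_assoc] at h2' ⊢
    rw [idem_mul he, idem_mul hf]
    exact h2'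
  have hfe : f*e = (e*f)⁻¹ := iu (e*f) (f*e) A B
  rw [hfe, inv_idem h1]

lemma mul_inv' (x y : S) : (x * y)⁻¹ = y⁻¹ * x⁻¹ := by
  have hc : (y*y⁻¹)*(x⁻¹*x) = (x⁻¹*x)*(y*y⁻¹) := idem_comm (idemR y) (idemL x)
  have A : (x*y) * (y⁻¹*x⁻¹) * (x*y) = x*y := by
    calc (x*y) * (y⁻¹*x⁻¹) * (x*y) = x*((y*y⁻¹)*(x⁻¹*x))*y := by simp only [mul_assoc]
      _ = x*((x⁻¹*x)*(y*y⁻¹))*y := by rw [hc]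
      _ = (x*x⁻¹*x)*(y*y⁻¹*y) := by simp only [mul_assoc]
      _ = x*y := by rw [mim, mim]
  have B : (y⁻¹*x⁻¹) * (x*y) * (y⁻¹*x⁻¹) = y⁻¹*x⁻¹ := by
    calc (y⁻¹*x⁻¹) * (x*y) * (y⁻¹*x⁻¹) = y⁻¹*((x⁻¹*x)*(y*y⁻¹))*x⁻¹ := by simp only [mul_assoc]
      _ = y⁻¹*((y*y⁻¹)*(x⁻¹*x))*x⁻¹ := by rw [hc]
      _ = (y⁻¹*y*y⁻¹)*(x⁻¹*x*x⁻¹) := by simp only [mul_assoc]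
      _ = y⁻¹*x⁻¹ := by rw [imi, imi]
  exact (iu (x*y) (y⁻¹*x⁻¹) A B).symm

end ISG

namespace ISG
variable {S : Type*} [InverseSemigroup S]

lemma natLe_antisymm {x y : S} (hxy : natLe x y) (hyx : natLe y x) : x = y := by
  have he := idemR x; have hf := idemR y
  have hx' : x = (x*x⁻¹)*((y*y⁻¹)*x) := by
    conv_lhs => rw [hxy, hyx]
  have key : (y*y⁻¹)*((x*x⁻¹)*((y*y⁻¹)*x)) = (x*x⁻¹)*((y*y⁻¹)*x) := by
    have hc : (y*y⁻¹)*(x*x⁻¹) = (x*x⁻¹)*(y*y⁻¹) := idem_comm hf he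
    calc (y*y⁻¹)*((x*x⁻¹)*((y*y⁻¹)*x)) = ((y*y⁻¹)*(x*x⁻¹))*((y*y⁻¹)*x) := by
          simp only [mul_assoc]
      _ = ((x*x⁻¹)*(y*y⁻¹))*((y*y⁻¹)*x) := by rw [hc]
      _ = (x*x⁻¹)*(((y*y⁻¹)*(y*y⁻¹))*x) := by simp only [mul_assoc]
      _ = (x*x⁻¹)*((y*y⁻¹)*x) := by rw [hf]
  have : y = x := by
    calc y = y*y⁻¹*x := hyx
      _ = (y*y⁻¹)*((x*x⁻¹)*((y*y⁻¹)*x)) := by conv_lhs => rw [hx']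
      _ = (x*x⁻¹)*((y*y⁻¹)*x) := key
      _ = x := hx'.symm
  exact this.symm

end ISG

section Pow
variable {M : Type*} [Semigroup M]

lemma spow_add' (x : M) (m n : ℕ) : spowM x m * spowM x n = spowM x (m + n + 1) := by
  induction n with
  | zero => rfl
  | succ n ih =>
    show spowM x m * (spowM x n * x) = spowM x (m + n + 1) * x
    rw [← mul_assoc, ih]

lemma spow_stab' {x : M} {m : ℕ} (h : spowM x m * x = spowM x m) :
    ∀ j, spowM x (m + j) = spowM x m
  | 0 => rfl
  | j + 1 => by
    show spowM x (m + j) * x = spowM x m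
    rw [spow_stab' h j, h]

end Pow

namespace ISG
variable {S : Type*} [InverseSemigroup S]

variable (q : ℕ)

lemma meet_is {q : ℕ} (hs : ∀ x : S, spowM x q * x = spowM x q) (x y : S) :
    natLe (x * spowM (x⁻¹*y) q) x ∧ natLe (x * spowM (x⁻¹*y) q) y ∧
      ∀ w, natLe w x → natLe w y → natLe w (x * spowM (x⁻¹*y) q) := by
  set e := spowM (x⁻¹*y) q with hedef
  have he : e * e = e := by
    rw [hedef, spow_add' (x⁻¹*y) q q]
    have : q + q + 1 = q + (q + 1) := by omega
    rw [this]
    exact spow_stab' (hs (x⁻¹*y)) (q+1)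
  have he' : e⁻¹ = e := inv_idem he
  have hez : e * (x⁻¹*y) = e := hs (x⁻¹*y)
  refine ⟨?_, ?_, ?_⟩
  · -- x*e ≤ x
    have hc : e*(x⁻¹*x) = (x⁻¹*x)*e := idem_comm he (idemL x)
    show x*e = (x*e)*(x*e)⁻¹*x
    refine Eq.symm ?_
    calc (x*e)*(x*e)⁻¹*x = (x*e)*(e⁻¹*x⁻¹)*x := by rw [mul_inv']
      _ = (x*e)*(e*x⁻¹)*x := by rw [he']
      _ = x*((e*(e*(x⁻¹*x)))) := by simp only [mul_assoc]
      _ = x*(e*(x⁻¹*x)) := by rw [idem_mul he]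
      _ = x*((x⁻¹*x)*e) := by rw [hc]
      _ = (x*x⁻¹*x)*e := by simp only [mul_assoc]
      _ = x*e := by rw [mim]
  · -- x*e ≤ y
    show x*e = (x*e)*(x*e)⁻¹*y
    refine Eq.symm ?_
    calc (x*e)*(x*e)⁻¹*y = (x*e)*(e*x⁻¹)*y := by rw [mul_inv', he']
      _ = x*(e*(e*(x⁻¹*y))) := by simp only [mul_assoc]
      _ = x*(e*(x⁻¹*y)) := by rw [idem_mul he]
      _ = x*e := by rw [hez]
  · intro w hwx hwy
    have hf := idemR w
    have hfx : (w*w⁻¹)*x = w := hwx.symm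
    have hfy : (w*w⁻¹)*y = w := hwy.symm
    have hc : (w*w⁻¹)*(x*x⁻¹) = (x*x⁻¹)*(w*w⁻¹) := idem_comm hf (idemR x)
    have key1 : ((w*w⁻¹)*x)*(x⁻¹*y) = (w*w⁻¹)*x := by
      calc ((w*w⁻¹)*x)*(x⁻¹*y) = ((w*w⁻¹)*(x*x⁻¹))*y := by simp only [mul_assoc]
        _ = ((x*x⁻¹)*(w*w⁻¹))*y := by rw [hc]
        _ = (x*x⁻¹)*((w*w⁻¹)*y) := by simp only [mul_assoc]
        _ = (x*x⁻¹)*((w*w⁻¹)*x) := by rw [hfy, hfx]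
        _ = ((x*x⁻¹)*(w*w⁻¹))*x := by simp only [mul_assoc]
        _ = ((w*w⁻¹)*(x*x⁻¹))*x := by rw [hc]
        _ = (w*w⁻¹)*(x*x⁻¹*x) := by simp only [mul_assoc]
        _ = (w*w⁻¹)*x := by rw [mim]
    have key2 : ∀ k, ((w*w⁻¹)*x)*spowM (x⁻¹*y) k = (w*w⁻¹)*x := by
      intro k
      induction k with
      | zero => exact key1
      | succ k ih =>
        show ((w*w⁻¹)*x)*(spowM (x⁻¹*y) k * (x⁻¹*y)) = (w*w⁻¹)*x
        rw [← mul_assoc, ih]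
        exact key1
    show w = w*w⁻¹*(x*e)
    refine Eq.symm ?_
    calc w*w⁻¹*(x*e) = ((w*w⁻¹)*x)*spowM (x⁻¹*y) q := by rw [hedef]; simp only [mul_assoc]
      _ = (w*w⁻¹)*x := key2 q
      _ = w := hfx

end ISG


def trIpow (t : InvTerm) : ℕ → InvTerm
  | 0 => t
  | k + 1 => .mul (trIpow t k) t

def trSR (q : ℕ) : SRTerm → InvTerm
  | .var i => .var i
  | .mul u v => .mul (trSR q u) (trSR q v)
  | .add u v => .mul (trSR q u) (trIpow (.mul (.inv (trSR q u)) (trSR q v)) q)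

lemma trIpow_eval {S : Type*} [Mul S] (inv : S → S) (ρ : ℕ → S) (t : InvTerm) (k : ℕ) :
    (trIpow t k).evalOp (· * ·) inv ρ = spowM (t.evalOp (· * ·) inv ρ) k := by
  induction k with
  | zero => rfl
  | succ k ih => simp only [trIpow, InvTerm.evalOp, spowM, ih]

lemma tr_eval_S {S : Type u} [InverseSemigroup S] {q : ℕ} (add : S → S → S)
    (hform : ∀ x y : S, add x y = x * spowM (x⁻¹ * y) q) (ρ : ℕ → S) (t : SRTerm) :
    t.evalOp add (· * ·) ρ = (trSR q t).evalOp (· * ·) (·⁻¹) ρ := by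
  induction t with
  | var i => rfl
  | mul u v ihu ihv => simp only [SRTerm.evalOp, trSR, InvTerm.evalOp, ihu, ihv]
  | add u v ihu ihv =>
    simp only [SRTerm.evalOp, trSR, InvTerm.evalOp, trIpow_eval, ihu, ihv, hform]

def LB21 : List (Matrix (Fin 2) (Fin 2) ℕ) :=
  [0, Matrix.single 0 0 1, Matrix.single 0 1 1,
    Matrix.single 1 0 1, Matrix.single 1 1 1, 1]

lemma mem_B21_iff {A : Matrix (Fin 2) (Fin 2) ℕ} : A ∈ B21 ↔ A ∈ LB21 := by
  simp [B21, LB21]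

lemma B21_mul : ∀ A ∈ B21, ∀ B ∈ B21, A * B ∈ B21 := by
  simp only [mem_B21_iff]; decide

lemma B21_transpose : ∀ A ∈ B21, A.transpose ∈ B21 := by
  simp only [mem_B21_iff]; decide

lemma B21_cube : ∀ A ∈ B21, A * A * A = A * A := by
  simp only [mem_B21_iff]; decide

lemma B21_hprod_eq : ∀ A ∈ B21, ∀ B ∈ B21,
    hprod A B = A * (A.transpose * B * (A.transpose * B)) := by
  simp only [mem_B21_iff]; decide

lemma B21_form {q : ℕ} (hq : 1 ≤ q) :
    ∀ A ∈ B21, ∀ B ∈ B21, hprod A B = A * spowM (A.transpose * B) q := by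
  intro A hA B hB
  have hz : A.transpose * B ∈ B21 := B21_mul _ (B21_transpose A hA) _ hB
  have hstab : spowM (A.transpose * B) 1 * (A.transpose * B) = spowM (A.transpose * B) 1 :=
    B21_cube _ hz
  have h := spow_stab' hstab (q - 1)
  rw [show (1 : ℕ) + (q - 1) = q from by omega] at h
  rw [h]
  exact B21_hprod_eq A hA B hB

lemma tr_eval_B {q : ℕ} (hq : 1 ≤ q) (ρ : ℕ → Matrix (Fin 2) (Fin 2) ℕ)
    (hρ : ∀ i, ρ i ∈ B21) (t : SRTerm) :
    (trSR q t).evalOp (· * ·) Matrix.transpose ρ ∈ B21 ∧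
      t.evalOp hprod (· * ·) ρ = (trSR q t).evalOp (· * ·) Matrix.transpose ρ := by
  induction t with
  | var i => exact ⟨hρ i, rfl⟩
  | mul u v ihu ihv =>
    refine ⟨B21_mul _ ihu.1 _ ihv.1, ?_⟩
    simp only [SRTerm.evalOp, trSR, InvTerm.evalOp, ihu.2, ihv.2]
  | add u v ihu ihv =>
    have hu := ihu.1; have hv := ihv.1
    have hform := B21_form hq _ hu _ hv
    constructor
    · have hclosed : ∀ A ∈ B21, ∀ B ∈ B21, hprod A B ∈ B21 := by
        simp only [mem_B21_iff]; decide
      show (trSR q u).evalOp (· * ·) Matrix.transpose ρ *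
        (trIpow (.mul (.inv (trSR q u)) (trSR q v)) q).evalOp (· * ·) Matrix.transpose ρ ∈ B21
      rw [trIpow_eval]
      rw [show (InvTerm.mul (.inv (trSR q u)) (trSR q v)).evalOp (· * ·) Matrix.transpose ρ =
        ((trSR q u).evalOp (· * ·) Matrix.transpose ρ).transpose *
          ((trSR q v).evalOp (· * ·) Matrix.transpose ρ) from rfl]
      rw [← hform]
      exact hclosed _ hu _ hv
    · simp only [SRTerm.evalOp, trSR, InvTerm.evalOp, trIpow_eval, ihu.2, ihv.2]
      exact hform


/-- Let `S` be a finite combinatorial inverse semigroup with `x^p = x^(p+1)`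
for all `x` (some `p ≥ 2`), and let `add` be the meet operation of the natural partial order.
If `B₂¹` satisfies every inverse semigroup identity of `S`, then the ai-semiring
`(B₂¹, +_nat, ·)` satisfies every semiring identity of `(S, +_nat, ·)`. -/
theorem brandt_semiring_covers_natural_semiring {S : Type u} [InverseSemigroup S] [Finite S]
    (hcomb : Combinatorial S) (p : ℕ) (hp : 2 ≤ p)
    (hpow : ∀ x : S, spowM x (p - 1) = spowM x p)
    (add : S → S → S) (hadd : ∀ x y : S, IsMeetWrt natLe x y (add x y))
    (hB : ∀ e : InvTerm × InvTerm, SatInv S e → SatInvOn B21 (· * ·) Matrix.transpose e) :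
    ∀ e : SRTerm × SRTerm, SatSR add (· * ·) e → SatSROn B21 hprod (· * ·) e := by
  intro e hSat ρ hρ
  have hq1 : 1 ≤ p - 1 := by omega
  have hs : ∀ x : S, spowM x (p - 1) * x = spowM x (p - 1) := by
    intro x
    have h := hpow x
    rw [show p = (p - 1) + 1 from by omega] at h
    exact h.symm
  have hform : ∀ x y : S, add x y = x * spowM (x⁻¹ * y) (p - 1) := by
    intro x y
    obtain ⟨h1, h2, h3⟩ := ISG.meet_is hs x y
    obtain ⟨g1, g2, g3⟩ := hadd x y
    exact ISG.natLe_antisymm (h3 _ g1 g2) (g3 _ h1 h2)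
  have hInv : SatInv S (trSR (p - 1) e.1, trSR (p - 1) e.2) := by
    intro σ
    have h1 := tr_eval_S add hform σ e.1
    have h2 := tr_eval_S add hform σ e.2
    show (trSR (p - 1) e.1).evalOp (· * ·) (·⁻¹) σ = (trSR (p - 1) e.2).evalOp (· * ·) (·⁻¹) σ
    rw [← h1, ← h2]
    exact hSat σ
  have hOn := hB _ hInv
  have hb1 := tr_eval_B hq1 ρ hρ e.1
  have hb2 := tr_eval_B hq1 ρ hρ e.2
  show e.1.evalOp hprod (· * ·) ρ = e.2.evalOp hprod (· * ·) ρ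
  rw [hb1.2, hb2.2]
  exact hOn ρ hρ
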